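/- Let m ≥ 1, p_1,…,p_m ∈ [0,1] and α ∈ [0,1]. For every nonempty S ⊆ [m] define the Bonferroni local test t(S) = 1{ |S| · min_{i∈S} p_i ≤ α } and the closed-testing indicator t̄(S) = 1 iff t(J) = 1 for every J with S ⊆ J ⊆ [m]. Then the procedure is consonant: for every nonempty S ⊆ [m], if t̄(S) = 1 then there exists i ∈ S with t̄({i}) = 1. -/

import Mathlib

/-- closed testing with the Bonferroni local test
`t(S) = 1{|S|·min_{i∈S} p_i ≤ α}` is consonant: whenever closed testing rejects a
nonempty `S`, it also rejects some singleton `{i}` with `i ∈ S`. -/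
theorem stmt_18 (m : ℕ) (hm : 1 ≤ m) (p : Fin m → ℝ)
    (hp : ∀ i, p i ∈ Set.Icc (0:ℝ) 1) (α : ℝ) (hα : α ∈ Set.Icc (0:ℝ) 1)
    (S : Finset (Fin m)) (hS : S.Nonempty)
    (hrej : ∀ J : Finset (Fin m), S ⊆ J → (J.card : ℝ) * sInf (p '' ↑J) ≤ α) :
    ∃ i ∈ S, ∀ K : Finset (Fin m), ({i} : Finset (Fin m)) ⊆ K →
      (K.card : ℝ) * sInf (p '' ↑K) ≤ α := by
  obtain ⟨i, hiS, hmin⟩ := S.exists_min_image p hS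
  refine ⟨i, hiS, fun K hK => ?_⟩
  have hiK : i ∈ K := hK (Finset.mem_singleton_self i)
  set J := S ∪ K with hJdef
  have hSJ : S ⊆ J := Finset.subset_union_left
  have hKJ : K ⊆ J := Finset.subset_union_right
  have hKJ' : (↑K : Set (Fin m)) ⊆ ↑J := Finset.coe_subset.mpr hKJ
  have hKne : (p '' (↑K : Set (Fin m))).Nonempty := ⟨p i, ⟨i, by simpa, rfl⟩⟩
  have hJne : (p '' (↑J : Set (Fin m))).Nonempty := hKne.mono (Set.image_mono hKJ')
  have hJfin : (p '' (↑J : Set (Fin m))).Finite := J.finite_toSet.image p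
  have hbJ : BddBelow (p '' (↑J : Set (Fin m))) := hJfin.bddBelow
  have h1 : sInf (p '' (↑J : Set (Fin m))) ≤ sInf (p '' (↑K : Set (Fin m))) :=
    csInf_le_csInf hbJ hKne (Set.image_mono hKJ')
  have h2 : sInf (p '' (↑K : Set (Fin m))) ≤ sInf (p '' (↑J : Set (Fin m))) := by
    obtain ⟨j, hjJ, hje⟩ := hJne.csInf_mem hJfin
    rw [← hje]
    have hbK : BddBelow (p '' (↑K : Set (Fin m))) := (K.finite_toSet.image p).bddBelow
    rcases Finset.mem_union.mp (by exact_mod_cast hjJ) with hjS | hjK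
    · exact le_trans (csInf_le hbK ⟨i, by simpa, rfl⟩) (hmin j hjS)
    · exact csInf_le hbK ⟨j, by simpa, rfl⟩
  have heq : sInf (p '' (↑K : Set (Fin m))) = sInf (p '' (↑J : Set (Fin m))) :=
    le_antisymm h2 h1
  have hnn : 0 ≤ sInf (p '' (↑J : Set (Fin m))) :=
    le_csInf hJne (fun x hx => by obtain ⟨a, _, rfl⟩ := hx; exact (hp a).1)
  calc (K.card : ℝ) * sInf (p '' (↑K : Set (Fin m)))
      = (K.card : ℝ) * sInf (p '' (↑J : Set (Fin m))) := by rw [heq]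
    _ ≤ (J.card : ℝ) * sInf (p '' (↑J : Set (Fin m))) := by
        apply mul_le_mul_of_nonneg_right _ hnn
        exact_mod_cast Finset.card_le_card hKJ
    _ ≤ α := hrej J hSJ
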